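/- Let X be a random variable taking values in the interval [0,1] with E[X] ≥ μ for some 0 < μ < 1/2, and let δ ∈ (0,1). For each integer r ≥ 1, set p_r = Pr[X ≥ 2^{−r}] and s_r = 4·ln(1/δ)/(μ·2^r). Then ∏_{r=1}^{⌈3·log₂(1/μ)⌉} (1 − p_r)^{s_r} ≤ δ. -/

import Mathlib

open MeasureTheory

/-- Work investment strategy (Berman–Raskhodnikova–Yaroslavtsev): for a random variable
`X ∈ [0,1]` with `E[X] ≥ μ`, `0 < μ < 1/2`, setting `p_r = Pr[X ≥ 2^{-r}]` and
`s_r = 4 ln(1/δ) / (μ 2^r)`, we have `∏_{r=1}^{⌈3 log₂(1/μ)⌉} (1 - p_r)^{s_r} ≤ δ`. -/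
theorem stmt1 {Ω : Type*} [MeasurableSpace Ω] (P : Measure Ω) [IsProbabilityMeasure P]
    (X : Ω → ℝ) (hX : Measurable X) (hX01 : ∀ ω, X ω ∈ Set.Icc (0 : ℝ) 1)
    (μ : ℝ) (hμ0 : 0 < μ) (hμ2 : μ < 1 / 2) (hE : μ ≤ ∫ ω, X ω ∂P)
    (δ : ℝ) (hδ : δ ∈ Set.Ioo (0 : ℝ) 1) :
    ∏ r ∈ Finset.Icc 1 ⌈3 * Real.logb 2 (1 / μ)⌉₊,
      (1 - (P {ω | (2 : ℝ) ^ (-(r : ℤ)) ≤ X ω}).toReal) ^ (4 * Real.log (1 / δ) / (μ * 2 ^ r))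
      ≤ δ := by
  obtain ⟨hδ0, hδ1⟩ := hδ
  set R : ℕ := ⌈3 * Real.logb 2 (1 / μ)⌉₊ with hRdef
  set p : ℕ → ℝ := fun r => (P {ω | (2 : ℝ) ^ (-(r : ℤ)) ≤ X ω}).toReal with hpdef
  set L : ℝ := Real.log (1 / δ) with hLdef
  have hL : 0 < L := Real.log_pos (one_lt_one_div hδ0 hδ1)
  have hμ1 : μ < 1 := by linarith
  have hmeas : ∀ r : ℕ, MeasurableSet {ω | (2 : ℝ) ^ (-(r : ℤ)) ≤ X ω} := fun r =>
    hX measurableSet_Ici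
  have hp0 : ∀ r, 0 ≤ p r := fun r => ENNReal.toReal_nonneg
  have hp1 : ∀ r, p r ≤ 1 := fun r => by
    have h1 : P {ω | (2 : ℝ) ^ (-(r : ℤ)) ≤ X ω} ≤ 1 := prob_le_one
    have h2 := ENNReal.toReal_mono ENNReal.one_ne_top h1
    rwa [ENNReal.toReal_one] at h2
  have hlogb1 : 1 ≤ Real.logb 2 (1 / μ) := by
    have h2 : (2 : ℝ) ≤ 1 / μ := by rw [le_one_div (by norm_num) hμ0]; linarith
    calc (1 : ℝ) = Real.logb 2 2 := by simp
      _ ≤ Real.logb 2 (1 / μ) := Real.logb_le_logb_of_le (by norm_num) (by norm_num) h2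
  have hR1 : 1 ≤ R := Nat.one_le_ceil_iff.mpr (by nlinarith)
  -- 2 ^ (-R) ≤ μ / 2
  have h2R : (2 : ℝ) ^ (-(R : ℤ)) ≤ μ / 2 := by
    have hRge : Real.logb 2 (2 / μ) ≤ (R : ℝ) := by
      have h1 : Real.logb 2 (2 / μ) = 1 + Real.logb 2 (1 / μ) := by
        rw [show (2 : ℝ) / μ = 2 * (1 / μ) by ring,
          Real.logb_mul (by norm_num) (by positivity)]
        simp
      have h2 := Nat.le_ceil (3 * Real.logb 2 (1 / μ))
      rw [h1]; rw [hRdef]; push_cast; nlinarith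
    have hrw : (2 : ℝ) ^ ((R : ℝ)) = (2 : ℝ) ^ (R : ℕ) := by
      rw [← Real.rpow_natCast]
    have h3 : 2 / μ ≤ (2 : ℝ) ^ (R : ℕ) := by
      rw [← hrw]
      calc 2 / μ = (2 : ℝ) ^ Real.logb 2 (2 / μ) :=
            (Real.rpow_logb (by norm_num) (by norm_num) (by positivity)).symm
        _ ≤ (2 : ℝ) ^ ((R : ℝ)) := Real.rpow_le_rpow_of_exponent_le (by norm_num) hRge
    have h4 : (2 : ℝ) ^ (-(R : ℤ)) = ((2 : ℝ) ^ (R : ℕ))⁻¹ := by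
      rw [zpow_neg, zpow_natCast]
    rw [h4, show μ / 2 = (2 / μ)⁻¹ by field_simp]
    exact inv_anti₀ (by positivity) h3
  -- pointwise bound
  have key : ∀ ω, X ω ≤ (2 : ℝ) ^ (-(R : ℤ)) + ∑ r ∈ Finset.Icc 1 R,
      2 * (2 : ℝ) ^ (-(r : ℤ)) * Set.indicator {ω' | (2 : ℝ) ^ (-(r : ℤ)) ≤ X ω'} 1 ω := by
    intro ω
    have hnn : ∀ r ∈ Finset.Icc 1 R,
        (0 : ℝ) ≤ 2 * (2 : ℝ) ^ (-(r : ℤ)) * Set.indicator {ω' | (2 : ℝ) ^ (-(r : ℤ)) ≤ X ω'} 1 ω :=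
      fun r _ => mul_nonneg (by positivity) (Set.indicator_nonneg (fun _ _ => zero_le_one) ω)
    rcases le_or_gt (X ω) ((2 : ℝ) ^ (-(R : ℤ))) with h | h
    · have := Finset.sum_nonneg hnn; linarith
    · set S := (Finset.Icc 1 R).filter (fun r : ℕ => (2 : ℝ) ^ (-(r : ℤ)) ≤ X ω) with hSdef
      have hRS : R ∈ S := Finset.mem_filter.mpr ⟨Finset.mem_Icc.mpr ⟨hR1, le_rfl⟩, h.le⟩
      have hne : S.Nonempty := ⟨R, hRS⟩
      set m := S.min' hne with hmdef
      have hmS : m ∈ S := S.min'_mem hne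
      obtain ⟨hmIcc, hmle⟩ := Finset.mem_filter.mp hmS
      obtain ⟨hm1, hmR⟩ := Finset.mem_Icc.mp hmIcc
      have hind : Set.indicator {ω' | (2 : ℝ) ^ (-(m : ℤ)) ≤ X ω'} (1 : Ω → ℝ) ω = 1 :=
        Set.indicator_of_mem hmle 1
      have hterm : 2 * (2 : ℝ) ^ (-(m : ℤ)) *
          Set.indicator {ω' | (2 : ℝ) ^ (-(m : ℤ)) ≤ X ω'} 1 ω ≤ ∑ r ∈ Finset.Icc 1 R,
          2 * (2 : ℝ) ^ (-(r : ℤ)) * Set.indicator {ω' | (2 : ℝ) ^ (-(r : ℤ)) ≤ X ω'} 1 ω :=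
        Finset.single_le_sum hnn hmIcc
      have hx2m : X ω ≤ 2 * (2 : ℝ) ^ (-(m : ℤ)) := by
        rcases eq_or_lt_of_le hm1 with h1 | h1
        · have : 2 * (2 : ℝ) ^ (-(m : ℤ)) = 1 := by rw [← h1]; norm_num
          rw [this]; exact (hX01 ω).2
        · have hm1' : m - 1 ∈ Finset.Icc 1 R := Finset.mem_Icc.mpr ⟨by omega, by omega⟩
          have hnot : m - 1 ∉ S := fun hmem => by
            have := S.min'_le _ hmem; omega
          have hlt : ¬ ((2 : ℝ) ^ (-((m - 1 : ℕ) : ℤ)) ≤ X ω) := fun hc =>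
            hnot (Finset.mem_filter.mpr ⟨hm1', hc⟩)
          push_neg at hlt
          have heq : (2 : ℝ) ^ (-((m - 1 : ℕ) : ℤ)) = 2 * (2 : ℝ) ^ (-(m : ℤ)) := by
            have hc : -((m - 1 : ℕ) : ℤ) = -(m : ℤ) + 1 := by omega
            rw [hc, zpow_add₀ (two_ne_zero)]; ring
          rw [heq] at hlt; linarith
      rw [hind] at hterm
      have hRpos : (0 : ℝ) ≤ (2 : ℝ) ^ (-(R : ℤ)) := by positivity
      linarith
  -- integrability and integration
  have hint_ind : ∀ r : ℕ, Integrable (fun ω => 2 * (2 : ℝ) ^ (-(r : ℤ)) *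
      Set.indicator {ω' | (2 : ℝ) ^ (-(r : ℤ)) ≤ X ω'} 1 ω) P := fun r =>
    ((integrable_const (1 : ℝ)).indicator (hmeas r)).const_mul _
  have hint_sum : Integrable (fun ω => ∑ r ∈ Finset.Icc 1 R,
      2 * (2 : ℝ) ^ (-(r : ℤ)) * Set.indicator {ω' | (2 : ℝ) ^ (-(r : ℤ)) ≤ X ω'} 1 ω) P :=
    integrable_finset_sum _ fun r _ => hint_ind r
  have hX_int : Integrable X P := by
    apply Integrable.mono' (integrable_const (1 : ℝ)) hX.aestronglyMeasurable
    filter_upwards with ω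
    rw [Real.norm_eq_abs, abs_le]
    exact ⟨by linarith [(hX01 ω).1], (hX01 ω).2⟩
  have hEb : μ ≤ (2 : ℝ) ^ (-(R : ℤ)) + ∑ r ∈ Finset.Icc 1 R,
      2 * (2 : ℝ) ^ (-(r : ℤ)) * p r := by
    have h1 : ∫ ω, X ω ∂P ≤ ∫ ω, ((2 : ℝ) ^ (-(R : ℤ)) + ∑ r ∈ Finset.Icc 1 R,
        2 * (2 : ℝ) ^ (-(r : ℤ)) * Set.indicator {ω' | (2 : ℝ) ^ (-(r : ℤ)) ≤ X ω'} 1 ω) ∂P :=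
      integral_mono hX_int ((integrable_const _).add hint_sum) key
    have h2 : ∫ ω, ((2 : ℝ) ^ (-(R : ℤ)) + ∑ r ∈ Finset.Icc 1 R,
        2 * (2 : ℝ) ^ (-(r : ℤ)) * Set.indicator {ω' | (2 : ℝ) ^ (-(r : ℤ)) ≤ X ω'} 1 ω) ∂P
        = (2 : ℝ) ^ (-(R : ℤ)) + ∑ r ∈ Finset.Icc 1 R, 2 * (2 : ℝ) ^ (-(r : ℤ)) * p r := by
      rw [integral_add (integrable_const _) hint_sum, integral_const,
        integral_finset_sum _ (fun r _ => hint_ind r)]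
      simp only [probReal_univ, one_smul]
      congr 1
      apply Finset.sum_congr rfl
      intro r _
      rw [MeasureTheory.integral_const_mul, integral_indicator_one (hmeas r)]; rfl
    rw [h2] at h1
    linarith
  have hsum : μ / 4 ≤ ∑ r ∈ Finset.Icc 1 R, (2 : ℝ) ^ (-(r : ℤ)) * p r := by
    have heq : ∑ r ∈ Finset.Icc 1 R, 2 * (2 : ℝ) ^ (-(r : ℤ)) * p r
        = 2 * ∑ r ∈ Finset.Icc 1 R, (2 : ℝ) ^ (-(r : ℤ)) * p r := by
      rw [Finset.mul_sum]
      exact Finset.sum_congr rfl fun r _ => by ring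
    rw [heq] at hEb
    linarith
  -- final chain
  calc ∏ r ∈ Finset.Icc 1 R, (1 - p r) ^ (4 * L / (μ * 2 ^ r))
      ≤ ∏ r ∈ Finset.Icc 1 R, Real.exp (-(4 * L / (μ * 2 ^ r) * p r)) := by
        apply Finset.prod_le_prod
        · intro r _; exact Real.rpow_nonneg (by linarith [hp1 r]) _
        · intro r _
          have hs : 0 < 4 * L / (μ * 2 ^ r) := by positivity
          rcases lt_or_eq_of_le (hp1 r) with h | h
          · rw [Real.rpow_def_of_pos (by linarith)]
            apply Real.exp_le_exp.mpr
            have hlog : Real.log (1 - p r) ≤ -(p r) := by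
              have := Real.log_le_sub_one_of_pos (x := 1 - p r) (by linarith)
              linarith
            calc Real.log (1 - p r) * (4 * L / (μ * 2 ^ r))
                ≤ (-(p r)) * (4 * L / (μ * 2 ^ r)) := mul_le_mul_of_nonneg_right hlog hs.le
              _ = -(4 * L / (μ * 2 ^ r) * p r) := by ring
          · rw [show (1 : ℝ) - p r = 0 by rw [← h]; ring, Real.zero_rpow hs.ne']
            exact (Real.exp_pos _).le
    _ = Real.exp (∑ r ∈ Finset.Icc 1 R, -(4 * L / (μ * 2 ^ r) * p r)) :=
        (Real.exp_sum _ _).symm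
    _ ≤ Real.exp (-L) := by
        apply Real.exp_le_exp.mpr
        have heq : ∑ r ∈ Finset.Icc 1 R, 4 * L / (μ * 2 ^ r) * p r
            = (4 * L / μ) * ∑ r ∈ Finset.Icc 1 R, (2 : ℝ) ^ (-(r : ℤ)) * p r := by
          rw [Finset.mul_sum]
          apply Finset.sum_congr rfl
          intro r _
          rw [zpow_neg, zpow_natCast]
          have h2r : ((2 : ℝ) ^ r) ≠ 0 := by positivity
          field_simp
        have hmul : (4 * L / μ) * (μ / 4) ≤ (4 * L / μ) *
            ∑ r ∈ Finset.Icc 1 R, (2 : ℝ) ^ (-(r : ℤ)) * p r :=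
          mul_le_mul_of_nonneg_left hsum (by positivity)
        have heq2 : (4 * L / μ) * (μ / 4) = L := by field_simp
        have hsumL : L ≤ ∑ r ∈ Finset.Icc 1 R, 4 * L / (μ * 2 ^ r) * p r := by
          rw [heq]; linarith
        have hneg : ∑ r ∈ Finset.Icc 1 R, -(4 * L / (μ * 2 ^ r) * p r)
            = -(∑ r ∈ Finset.Icc 1 R, 4 * L / (μ * 2 ^ r) * p r) := by
          rw [Finset.sum_neg_distrib]
        rw [hneg]; linarith
    _ = δ := by
        rw [show -L = Real.log δ by rw [hLdef, one_div, Real.log_inv, neg_neg],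
          Real.exp_log hδ0]
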